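/- Let x : ℕ → ℂ be such that j ↦ |x(j)| is summable, and let n : ℕ. Then the family, indexed by multi-indices I with |I| = n, given by I ↦ (n!/I!)·∏_j x(j)^(I(j)) is summable, and its sum equals (∑'_j x(j))^n. -/

import Mathlib

open scoped BigOperators

/-- The degree `|I| = ∑_j I j` of a multi-index. -/
noncomputable def mdeg (I : ℕ →₀ ℕ) : ℕ := I.sum fun _ n => n

/-- The factorial `I! = ∏_j (I j)!` of a multi-index. -/
noncomputable def mfact (I : ℕ →₀ ℕ) : ℕ := I.prod fun _ n => n.factorial

lemma aux_finite {K : Type*} [Field K] [CharZero K] (x : ℕ → K) (n : ℕ) (s : Finset ℕ) :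
    (∑ j ∈ s, x j) ^ n =
      ∑ I ∈ Finset.finsuppAntidiag s n,
        ((Nat.factorial n : K) / (mfact I : K)) * ∏ j ∈ I.support, x j ^ I j := by
  classical
  rw [Finset.sum_pow_eq_sum_piAntidiag]
  refine (Finset.sum_nbij (fun I : ℕ →₀ ℕ => ⇑I) ?_ ?_ ?_ ?_).symm
  · intro I hI
    rw [Finset.mem_finsuppAntidiag] at hI
    rw [Finset.mem_piAntidiag]
    exact ⟨hI.1, fun i hi => hI.2 (Finsupp.mem_support_iff.2 hi)⟩
  · intro I _ J _ h
    exact DFunLike.coe_injective h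
  · intro k hk
    rw [Finset.mem_coe, Finset.mem_piAntidiag] at hk
    have hsupp : ∀ a : ℕ, a ∈ s.filter (fun i => k i ≠ 0) ↔ k a ≠ 0 := by
      intro a
      simp only [Finset.mem_filter]
      exact ⟨fun h => h.2, fun h => ⟨hk.2 a h, h⟩⟩
    refine ⟨⟨s.filter (fun i => k i ≠ 0), k, hsupp⟩, ?_, rfl⟩
    rw [Finset.mem_coe, Finset.mem_finsuppAntidiag]
    constructor
    · exact hk.1
    · intro a ha
      rw [Finsupp.mem_support_iff] at ha
      exact hk.2 a ha
  · intro I hI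
    rw [Finset.mem_finsuppAntidiag] at hI
    have hsum : ∑ i ∈ s, I i = n := hI.1
    have hsupp : I.support ⊆ s := hI.2
    have hprod : ∏ j ∈ I.support, x j ^ I j = ∏ i ∈ s, x i ^ I i := by
      refine Finset.prod_subset hsupp fun i _ hni => ?_
      rw [Finsupp.notMem_support_iff.mp hni, pow_zero]
    have hfact : mfact I = ∏ i ∈ s, (I i).factorial :=
      Finsupp.prod_of_support_subset I hsupp (fun _ m => m.factorial) (fun _ _ => rfl)
    have hspec : (∏ i ∈ s, (I i).factorial) * Nat.multinomial s ⇑I = n.factorial := by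
      rw [Nat.multinomial_spec, hsum]
    have hm : ((Nat.factorial n : K) / (mfact I : K)) = (Nat.multinomial s ⇑I : K) := by
      have hne : (mfact I : K) ≠ 0 := by
        rw [hfact]
        exact_mod_cast (Finset.prod_pos (fun i _ => (I i).factorial_pos)).ne'
      rw [div_eq_iff hne, hfact, ← Nat.cast_mul, mul_comm, hspec]
    rw [hm, hprod]

theorem stmt5 (x : ℕ → ℂ) (hx : Summable fun j => ‖x j‖) (n : ℕ) :
    (Summable fun I : {I : ℕ →₀ ℕ // mdeg I = n} =>
      ((Nat.factorial n : ℂ) / (mfact I.1 : ℂ)) * ∏ j ∈ I.1.support, x j ^ I.1 j) ∧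
    ∑' I : {I : ℕ →₀ ℕ // mdeg I = n},
        ((Nat.factorial n : ℂ) / (mfact I.1 : ℂ)) * ∏ j ∈ I.1.support, x j ^ I.1 j =
      (∑' j, x j) ^ n := by
  classical
  set p : (ℕ →₀ ℕ) → Prop := fun I => mdeg I = n with hp
  set F : {I : ℕ →₀ ℕ // mdeg I = n} → ℂ := fun I =>
    ((Nat.factorial n : ℂ) / (mfact I.1 : ℂ)) * ∏ j ∈ I.1.support, x j ^ I.1 j with hFdef
  have hmem : ∀ (s : Finset ℕ) (I : ℕ →₀ ℕ),
      I ∈ Finset.finsuppAntidiag s n ↔ mdeg I = n ∧ I.support ⊆ s := by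
    intro s I
    rw [Finset.mem_finsuppAntidiag']
    rfl
  set T : Finset ℕ → Finset {I : ℕ →₀ ℕ // mdeg I = n} :=
    fun s => (Finset.finsuppAntidiag s n).subtype p with hTdef
  have hT : ∀ (s : Finset ℕ) (I : {I : ℕ →₀ ℕ // mdeg I = n}),
      I ∈ T s ↔ I.1.support ⊆ s := by
    intro s I
    simp only [hTdef, Finset.mem_subtype, hmem]
    exact ⟨fun h => h.2, fun h => ⟨I.2, h⟩⟩
  have hTsum : ∀ {M : Type} [AddCommMonoid M] (G : (ℕ →₀ ℕ) → M) (s : Finset ℕ),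
      ∑ I ∈ T s, G I.1 = ∑ I ∈ Finset.finsuppAntidiag s n, G I := by
    intro M _ G s
    rw [hTdef, Finset.sum_subtype_eq_sum_filter, Finset.filter_true_of_mem]
    intro I hI
    exact ((hmem s I).1 hI).1
  have hnorm : ∀ I : {I : ℕ →₀ ℕ // mdeg I = n},
      ‖F I‖ = ((Nat.factorial n : ℝ) / (mfact I.1 : ℝ)) * ∏ j ∈ I.1.support, ‖x j‖ ^ I.1 j := by
    intro I
    simp [hFdef, norm_mul, norm_div, norm_prod, norm_pow]
  -- sums over T s
  have hCsum : ∀ s : Finset ℕ, ∑ I ∈ T s, F I = (∑ j ∈ s, x j) ^ n := by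
    intro s
    rw [hFdef, hTsum (fun I : ℕ →₀ ℕ =>
      ((Nat.factorial n : ℂ) / (mfact I : ℂ)) * ∏ j ∈ I.support, x j ^ I j) s, ← aux_finite]
  have hRsum : ∀ s : Finset ℕ, ∑ I ∈ T s, ‖F I‖ = (∑ j ∈ s, ‖x j‖) ^ n := by
    intro s
    calc ∑ I ∈ T s, ‖F I‖
        = ∑ I ∈ T s, ((Nat.factorial n : ℝ) / (mfact I.1 : ℝ)) *
            ∏ j ∈ I.1.support, ‖x j‖ ^ I.1 j := Finset.sum_congr rfl fun I _ => hnorm I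
      _ = (∑ j ∈ s, ‖x j‖) ^ n := by
          rw [hTsum (fun I : ℕ →₀ ℕ =>
            ((Nat.factorial n : ℝ) / (mfact I : ℝ)) * ∏ j ∈ I.support, ‖x j‖ ^ I j) s,
            ← aux_finite]
  -- boundedness
  have hbound : ∀ A : Finset {I : ℕ →₀ ℕ // mdeg I = n},
      ∑ I ∈ A, ‖F I‖ ≤ (∑' j, ‖x j‖) ^ n := by
    intro A
    set s : Finset ℕ := A.sup fun I => I.1.support with hs
    have hAT : A ⊆ T s := by
      intro I hI
      rw [hT]
      exact Finset.le_sup (f := fun I : {I : ℕ →₀ ℕ // mdeg I = n} => I.1.support) hI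
    calc ∑ I ∈ A, ‖F I‖ ≤ ∑ I ∈ T s, ‖F I‖ :=
          Finset.sum_le_sum_of_subset_of_nonneg hAT fun I _ _ => norm_nonneg _
      _ = (∑ j ∈ s, ‖x j‖) ^ n := hRsum s
      _ ≤ (∑' j, ‖x j‖) ^ n := by
          refine pow_le_pow_left₀ (Finset.sum_nonneg fun j _ => norm_nonneg _) ?_ n
          exact Summable.sum_le_tsum s (fun j _ => norm_nonneg _) hx
  have hsummable : Summable F :=
    Summable.of_norm (summable_of_sum_le (fun I => norm_nonneg _) hbound)
  refine ⟨hsummable, ?_⟩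
  -- limits
  have hmono : Monotone T := by
    intro s t hst I hI
    rw [hT] at hI ⊢
    exact hI.trans hst
  have hcof : ∀ I : {I : ℕ →₀ ℕ // mdeg I = n}, ∃ s, I ∈ T s :=
    fun I => ⟨I.1.support, (hT _ I).2 le_rfl⟩
  have hTtop : Filter.Tendsto T Filter.atTop Filter.atTop :=
    Filter.tendsto_atTop_finset_of_monotone hmono hcof
  have h1 : Filter.Tendsto (fun s : Finset ℕ => ∑ I ∈ T s, F I)
      Filter.atTop (nhds (∑' I, F I)) := hsummable.hasSum.comp hTtop
  have h1' : Filter.Tendsto (fun s : Finset ℕ => (∑ j ∈ s, x j) ^ n)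
      Filter.atTop (nhds (∑' I, F I)) := by
    refine h1.congr fun s => hCsum s
  have h2 : Filter.Tendsto (fun s : Finset ℕ => (∑ j ∈ s, x j) ^ n)
      Filter.atTop (nhds ((∑' j, x j) ^ n)) :=
    (hx.of_norm.hasSum).pow n
  exact tendsto_nhds_unique h1' h2
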